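/- Fix m ∈ ℕ, vectors ν^{(1)}, ν^{(2)}, ν^{(3)}, ν^{(4)} ∈ [0,1]^m, continuous barriers α, β ∈ C[0,1] with α(t) < β(t) for all t, and define G(x) = g( Π(x, π(x)·ν^{(1)}), Π(x, ν^{(2)}), Π(x*, π(x)·ν^{(3)}), Π(x*, ν^{(4)}), π(x) ) for x ∈ D[0,1], where g : ℝ^{4m+1} → ℝ. If x ∈ C_1 ∪ C_2 ∪ C_3 and g is continuous at the point ( Π(x, π(x)·ν^{(1)}), Π(x, ν^{(2)}), Π(x*, π(x)·ν^{(3)}), Π(x*, ν^{(4)}), π(x) ), then for every sequence (x_n) in D[0,1] converging to x in the Skorohod topology, G(x_n) → G(x). -/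

import Mathlib

open Set Filter

/-- A function `x : ℝ → ℝ` is RCLL (càdlàg) on `[0,1]`. -/
def RCLL (x : ℝ → ℝ) : Prop :=
  (∀ t ∈ Set.Ico (0:ℝ) 1,
      Filter.Tendsto x (nhdsWithin t (Set.Ioc t 1)) (nhds (x t))) ∧
  (∀ t ∈ Set.Ioc (0:ℝ) 1,
      ∃ L : ℝ, Filter.Tendsto x (nhdsWithin t (Set.Ico 0 t)) (nhds L))

/-- The uniform "norm" of a function over `[0,1]`. -/
noncomputable def unifNorm (f : ℝ → ℝ) : ℝ :=
  sSup ((fun t => |f t|) '' Set.Icc 0 1)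

/-- Membership in `Λ`. -/
def MemLambda (l : ℝ → ℝ) : Prop :=
  ContinuousOn l (Set.Icc 0 1) ∧ StrictMonoOn l (Set.Icc 0 1) ∧
    Set.BijOn l (Set.Icc 0 1) (Set.Icc 0 1) ∧ l 0 = 0 ∧ l 1 = 1

/-- Skorohod convergence of a sequence `x_n → x` in `D[0,1]`. -/
def SkorohodTendsto (xn : ℕ → ℝ → ℝ) (x : ℝ → ℝ) : Prop :=
  ∃ l : ℕ → ℝ → ℝ, (∀ n, MemLambda (l n)) ∧
    Filter.Tendsto (fun n => unifNorm (fun t => l n t - t)) Filter.atTop (nhds 0) ∧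
    Filter.Tendsto (fun n => unifNorm (fun t => xn n t - x (l n t))) Filter.atTop (nhds 0)

/-- The first exit time `π(x) = inf{ t ∈ [0,1] : x(t) ∉ (α(t), β(t)) } ∧ 1`
(with the convention `inf ∅ = +∞`, realized by adjoining `{1}` before taking
the infimum, since the exit set is contained in `[0,1]`). -/
noncomputable def exitTime (a b x : ℝ → ℝ) : ℝ :=
  sInf ({t ∈ Set.Icc (0:ℝ) 1 | x t ≤ a t ∨ b t ≤ x t} ∪ {1})


/-- Membership in `C_1`. -/
def MemC1 (a b x : ℝ → ℝ) : Prop :=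
  ContinuousOn x (Set.Icc 0 1) ∧ exitTime a b x < 1 ∧
    x (exitTime a b x) = b (exitTime a b x) ∧
    sInf ({t | exitTime a b x < t ∧ t ≤ 1 ∧ b t < x t} ∪ {1}) = exitTime a b x

/-- Membership in `C_2`. -/
def MemC2 (a b x : ℝ → ℝ) : Prop :=
  ContinuousOn x (Set.Icc 0 1) ∧ exitTime a b x < 1 ∧
    x (exitTime a b x) = a (exitTime a b x) ∧
    sInf ({t | exitTime a b x < t ∧ t ≤ 1 ∧ x t < a t} ∪ {1}) = exitTime a b x

/-- Membership in `C_3`. -/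
def MemC3 (a b x : ℝ → ℝ) : Prop :=
  ContinuousOn x (Set.Icc 0 1) ∧ exitTime a b x = 1

/-- The running maximum `x*` of `x`. -/
noncomputable def runMax (x : ℝ → ℝ) : ℝ → ℝ :=
  fun t => sSup (x '' Set.Icc 0 t)

/-- The projection operator `Π(x, ν) = (x(ν_1), …, x(ν_m))`. -/
def proj (m : ℕ) (x : ℝ → ℝ) (ν : Fin m → ℝ) : Fin m → ℝ := fun i => x (ν i)

/-- The argument
`Z(x) = ( Π(x, π(x)·ν¹), Π(x, ν²), Π(x*, π(x)·ν³), Π(x*, ν⁴), π(x) )`. -/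
noncomputable def argZ (m : ℕ) (a b : ℝ → ℝ) (ν1 ν2 ν3 ν4 : Fin m → ℝ)
    (x : ℝ → ℝ) :
    (Fin m → ℝ) × (Fin m → ℝ) × (Fin m → ℝ) × (Fin m → ℝ) × ℝ :=
  (proj m x (fun i => exitTime a b x * ν1 i), proj m x ν2,
    proj m (runMax x) (fun i => exitTime a b x * ν3 i), proj m (runMax x) ν4,
    exitTime a b x)

/-- A càdlàg function is bounded on `[0,1]`. -/
lemma rcll_bdd {f : ℝ → ℝ} (hf : RCLL f) : ∃ M, ∀ t ∈ Set.Icc (0:ℝ) 1, |f t| ≤ M := by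
  set S : Set ℝ := {t ∈ Set.Icc (0:ℝ) 1 | ∃ M, ∀ s ∈ Set.Icc (0:ℝ) t, |f s| ≤ M} with hS
  have h0 : (0:ℝ) ∈ S := by
    refine ⟨⟨le_refl _, zero_le_one⟩, |f 0|, ?_⟩
    intro s hs
    have : s = 0 := le_antisymm hs.2 hs.1
    simp [this]
  have hbdd : BddAbove S := ⟨1, fun t ht => ht.1.2⟩
  have hne : S.Nonempty := ⟨0, h0⟩
  set c := sSup S with hc
  have hc0 : 0 ≤ c := le_csSup hbdd h0
  have hc1 : c ≤ 1 := csSup_le hne (fun t ht => ht.1.2)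
  have hcS : c ∈ S := by
    rcases eq_or_lt_of_le hc0 with h | h
    · rwa [← h]
    · -- use left limit at c
      obtain ⟨L, hL⟩ := hf.2 c ⟨h, hc1⟩
      rw [Metric.tendsto_nhdsWithin_nhds] at hL
      obtain ⟨δ, hδ, hδ'⟩ := hL 1 one_pos
      obtain ⟨t0, ht0S, ht0⟩ := exists_lt_of_lt_csSup hne (show c - min δ c / 2 < c by
        have : 0 < min δ c := lt_min hδ h
        linarith)
      obtain ⟨M0, hM0⟩ := ht0S.2
      refine ⟨⟨hc0, hc1⟩, max M0 (max (|L| + 1) (|f c|)), ?_⟩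
      intro s hs
      rcases le_or_gt s t0 with h1 | h1
      · exact le_trans (hM0 s ⟨hs.1, h1⟩) (le_max_left _ _)
      · rcases eq_or_lt_of_le hs.2 with h2 | h2
        · rw [h2]
          exact le_max_of_le_right (le_max_of_le_right (le_refl _))
        · have hsI : s ∈ Set.Ico (0:ℝ) c := ⟨hs.1, h2⟩
          have hds : dist s c < δ := by
            rw [Real.dist_eq, abs_of_nonpos (by linarith)]
            have hmin : 0 < min δ c := lt_min hδ h
            have := min_le_left δ c
            have := ht0.trans_le (le_csSup hbdd ht0S)
            nlinarith [ht0]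
          have := hδ' hsI hds
          rw [Real.dist_eq] at this
          have : |f s| ≤ |L| + 1 := by
            have h3 := abs_sub_abs_le_abs_sub (f s) L
            linarith
          exact le_trans this (le_trans (le_max_left _ _) (le_max_right _ _))
  have hc1' : c = 1 := by
    by_contra hne1
    have hclt : c < 1 := lt_of_le_of_ne hc1 hne1
    have hR := hf.1 c ⟨hc0, hclt⟩
    rw [Metric.tendsto_nhdsWithin_nhds] at hR
    obtain ⟨δ, hδ, hδ'⟩ := hR 1 one_pos
    set t1 := min (c + δ/2) 1 with ht1
    have hct1 : c < t1 := lt_min (by linarith) hclt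
    obtain ⟨hcm, Mc, hMc⟩ := hcS
    have ht1S : t1 ∈ S := by
      refine ⟨⟨le_trans hc0 hct1.le, min_le_right _ _⟩, max Mc (|f c| + 1), ?_⟩
      intro s hs
      rcases le_or_gt s c with h1 | h1
      · exact le_trans (hMc s ⟨hs.1, h1⟩) (le_max_left _ _)
      · have hsI : s ∈ Set.Ioc c 1 := ⟨h1, le_trans hs.2 (min_le_right _ _)⟩
        have hds : dist s c < δ := by
          rw [Real.dist_eq, abs_of_nonneg (by linarith)]
          have := hs.2
          have := min_le_left (c + δ/2) 1
          have hst1 : s ≤ c + δ/2 := le_trans hs.2 (min_le_left _ _)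
          linarith
        have := hδ' hsI hds
        rw [Real.dist_eq] at this
        have : |f s| ≤ |f c| + 1 := by
          have h3 := abs_sub_abs_le_abs_sub (f s) (f c)
          linarith
        exact le_trans this (le_max_right _ _)
    exact absurd (le_csSup hbdd ht1S) (not_le.2 hct1)
  obtain ⟨_, M, hM⟩ := hcS
  exact ⟨M, by rwa [hc1'] at hM⟩
lemma exitSet_nonempty (a b f : ℝ → ℝ) :
    ({t ∈ Set.Icc (0:ℝ) 1 | f t ≤ a t ∨ b t ≤ f t} ∪ {1}).Nonempty :=
  ⟨1, Set.mem_union_right _ rfl⟩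

lemma exitSet_bddBelow (a b f : ℝ → ℝ) :
    BddBelow ({t ∈ Set.Icc (0:ℝ) 1 | f t ≤ a t ∨ b t ≤ f t} ∪ {1}) := by
  refine ⟨0, fun y hy => ?_⟩
  rcases hy with hy | hy
  · exact hy.1.1
  · rw [Set.mem_singleton_iff] at hy; rw [hy]; exact zero_le_one

lemma exitTime_mem (a b f : ℝ → ℝ) : exitTime a b f ∈ Set.Icc (0:ℝ) 1 := by
  constructor
  · exact le_csInf (exitSet_nonempty a b f) (fun y hy => by
      rcases hy with hy | hy
      · exact hy.1.1
      · rw [Set.mem_singleton_iff] at hy; rw [hy]; exact zero_le_one)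
  · exact csInf_le (exitSet_bddBelow a b f) (Set.mem_union_right _ rfl)

lemma exit_interior {a b f : ℝ → ℝ} {t : ℝ} (ht : t ∈ Set.Icc (0:ℝ) 1)
    (h : t < exitTime a b f) : a t < f t ∧ f t < b t := by
  by_contra hcon
  have hmem : t ∈ ({s ∈ Set.Icc (0:ℝ) 1 | f s ≤ a s ∨ b s ≤ f s} ∪ {1}) := by
    left
    refine ⟨ht, ?_⟩
    rcases not_and_or.1 hcon with h1 | h1
    · exact Or.inl (not_lt.1 h1)
    · exact Or.inr (not_lt.1 h1)
  exact absurd (csInf_le (exitSet_bddBelow a b f) hmem) (not_le.2 h)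
lemma unif_conv {x : ℝ → ℝ} (hxc : ContinuousOn x (Set.Icc 0 1))
    {xn : ℕ → ℝ → ℝ} (hxn : ∀ n, RCLL (xn n)) (hconv : SkorohodTendsto xn x) :
    ∀ ε > 0, ∀ᶠ n in Filter.atTop, ∀ t ∈ Set.Icc (0:ℝ) 1, |xn n t - x t| ≤ ε := by
  obtain ⟨l, hlmem, hl1, hl2⟩ := hconv
  obtain ⟨Mx, hMx⟩ := isCompact_Icc.exists_bound_of_continuousOn hxc
  intro ε hε
  obtain ⟨δ, hδ, hδ'⟩ := Metric.uniformContinuousOn_iff.1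
    (isCompact_Icc.uniformContinuousOn_of_continuous hxc) (ε/2) (by positivity)
  have h1 : ∀ᶠ n in Filter.atTop, unifNorm (fun t => l n t - t) < δ := by
    filter_upwards [Metric.tendsto_nhds.1 hl1 δ hδ] with n hn
    rw [Real.dist_eq, sub_zero] at hn
    exact lt_of_le_of_lt (le_abs_self _) hn
  have h2 : ∀ᶠ n in Filter.atTop, unifNorm (fun t => xn n t - x (l n t)) < ε/2 := by
    filter_upwards [Metric.tendsto_nhds.1 hl2 (ε/2) (by positivity)] with n hn
    rw [Real.dist_eq, sub_zero] at hn
    exact lt_of_le_of_lt (le_abs_self _) hn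
  filter_upwards [h1, h2] with n hn1 hn2
  intro t ht
  have hlt : l n t ∈ Set.Icc (0:ℝ) 1 := (hlmem n).2.2.1.mapsTo ht
  obtain ⟨Mn, hMn⟩ := rcll_bdd (hxn n)
  have bdd1 : BddAbove ((fun t => |l n t - t|) '' Set.Icc (0:ℝ) 1) := by
    refine ⟨2, ?_⟩
    rintro y ⟨s, hs, rfl⟩
    have hls : l n s ∈ Set.Icc (0:ℝ) 1 := (hlmem n).2.2.1.mapsTo hs
    rw [abs_sub_le_iff]
    constructor <;> [skip; skip] <;>
      · have := hls.1; have := hls.2; have := hs.1; have := hs.2; linarith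
  have bdd2 : BddAbove ((fun t => |xn n t - x (l n t)|) '' Set.Icc (0:ℝ) 1) := by
    refine ⟨Mn + Mx, ?_⟩
    rintro y ⟨s, hs, rfl⟩
    have hls : l n s ∈ Set.Icc (0:ℝ) 1 := (hlmem n).2.2.1.mapsTo hs
    have h1 := hMn s hs
    have h2 := hMx (l n s) hls
    rw [Real.norm_eq_abs] at h2
    calc |xn n s - x (l n s)| ≤ |xn n s| + |x (l n s)| := abs_sub _ _
      _ ≤ Mn + Mx := add_le_add h1 h2
  have e1 : |l n t - t| ≤ unifNorm (fun t => l n t - t) :=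
    le_csSup bdd1 (Set.mem_image_of_mem _ ht)
  have e2 : |xn n t - x (l n t)| ≤ unifNorm (fun t => xn n t - x (l n t)) :=
    le_csSup bdd2 (Set.mem_image_of_mem _ ht)
  have e3 : |x (l n t) - x t| < ε/2 := by
    have hd : dist (l n t) t < δ := by rw [Real.dist_eq]; exact lt_of_le_of_lt e1 hn1
    have := hδ' (l n t) hlt t ht hd
    rwa [Real.dist_eq] at this
  calc |xn n t - x t| ≤ |xn n t - x (l n t)| + |x (l n t) - x t| := abs_sub_le _ _ _
    _ ≤ ε/2 + ε/2 := add_le_add (le_trans e2 hn2.le) e3.le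
    _ = ε := by ring
lemma eval_tendsto {x : ℝ → ℝ} (hxc : ContinuousOn x (Set.Icc 0 1))
    {xn : ℕ → ℝ → ℝ}
    (hU : ∀ ε > 0, ∀ᶠ n in Filter.atTop, ∀ t ∈ Set.Icc (0:ℝ) 1, |xn n t - x t| ≤ ε)
    {t : ℕ → ℝ} {t0 : ℝ} (htn : ∀ n, t n ∈ Set.Icc (0:ℝ) 1) (ht0 : t0 ∈ Set.Icc (0:ℝ) 1)
    (ht : Filter.Tendsto t Filter.atTop (nhds t0)) :
    Filter.Tendsto (fun n => xn n (t n)) Filter.atTop (nhds (x t0)) := by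
  rw [Metric.tendsto_nhds]
  intro ε hε
  have h2 : Filter.Tendsto (fun n => x (t n)) Filter.atTop (nhds (x t0)) :=
    (hxc t0 ht0).tendsto.comp (tendsto_nhdsWithin_iff.2 ⟨ht, Filter.Eventually.of_forall htn⟩)
  filter_upwards [hU (ε/4) (by positivity), Metric.tendsto_nhds.1 h2 (ε/2) (by positivity)]
    with n hn hn2
  have h3 := hn (t n) (htn n)
  rw [Real.dist_eq] at hn2 ⊢
  calc |xn n (t n) - x t0| ≤ |xn n (t n) - x (t n)| + |x (t n) - x t0| := abs_sub_le _ _ _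
    _ < ε/4 + ε/2 := by
        exact add_lt_add_of_le_of_lt h3 hn2
    _ < ε := by linarith

lemma bddAbove_image_of_bound {f : ℝ → ℝ} {M : ℝ}
    (h : ∀ s ∈ Set.Icc (0:ℝ) 1, |f s| ≤ M) {t : ℝ} (ht : t ∈ Set.Icc (0:ℝ) 1) :
    BddAbove (f '' Set.Icc 0 t) := by
  refine ⟨M, ?_⟩
  rintro y ⟨s, hs, rfl⟩
  exact le_trans (le_abs_self _) (h s ⟨hs.1, hs.2.trans ht.2⟩)

lemma runMax_diff {f x : ℝ → ℝ} {ε M : ℝ}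
    (hM : ∀ s ∈ Set.Icc (0:ℝ) 1, |x s| ≤ M)
    (h : ∀ s ∈ Set.Icc (0:ℝ) 1, |f s - x s| ≤ ε) {t : ℝ} (ht : t ∈ Set.Icc (0:ℝ) 1) :
    |runMax f t - runMax x t| ≤ ε := by
  have hε : 0 ≤ ε := le_trans (abs_nonneg _) (h 0 ⟨le_refl _, zero_le_one⟩)
  have hfM : ∀ s ∈ Set.Icc (0:ℝ) 1, |f s| ≤ M + ε := by
    intro s hs
    have := h s hs
    have := hM s hs
    have h1 := abs_sub_abs_le_abs_sub (f s) (x s)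
    linarith
  have hne : (Set.Icc (0:ℝ) t).Nonempty := ⟨0, le_refl _, ht.1⟩
  have bddx := bddAbove_image_of_bound hM ht
  have bddf := bddAbove_image_of_bound hfM ht
  rw [abs_sub_le_iff]
  constructor
  · rw [sub_le_iff_le_add]
    refine csSup_le (hne.image _) ?_
    rintro y ⟨s, hs, rfl⟩
    have hs1 : s ∈ Set.Icc (0:ℝ) 1 := ⟨hs.1, hs.2.trans ht.2⟩
    have h1 := (abs_le.1 (h s hs1)).2
    have h2 : x s ≤ runMax x t := le_csSup bddx (Set.mem_image_of_mem _ hs)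
    unfold runMax at h2 ⊢
    linarith
  · rw [sub_le_iff_le_add]
    refine csSup_le (hne.image _) ?_
    rintro y ⟨s, hs, rfl⟩
    have hs1 : s ∈ Set.Icc (0:ℝ) 1 := ⟨hs.1, hs.2.trans ht.2⟩
    have h1 := (abs_le.1 (h s hs1)).1
    have h2 : f s ≤ runMax f t := le_csSup bddf (Set.mem_image_of_mem _ hs)
    unfold runMax at h2 ⊢
    linarith

lemma runMax_uc {x : ℝ → ℝ} (hxc : ContinuousOn x (Set.Icc 0 1)) :
    ∀ ε > 0, ∃ δ > 0, ∀ u ∈ Set.Icc (0:ℝ) 1, ∀ v ∈ Set.Icc (0:ℝ) 1, |u - v| < δ →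
      |runMax x u - runMax x v| ≤ ε := by
  intro ε hε
  obtain ⟨Mx, hMx⟩ := isCompact_Icc.exists_bound_of_continuousOn hxc
  have hMx' : ∀ s ∈ Set.Icc (0:ℝ) 1, |x s| ≤ Mx := by
    intro s hs; have := hMx s hs; rwa [Real.norm_eq_abs] at this
  obtain ⟨δ, hδ, hδ'⟩ := Metric.uniformContinuousOn_iff.1
    (isCompact_Icc.uniformContinuousOn_of_continuous hxc) ε hε
  refine ⟨δ, hδ, ?_⟩
  have key : ∀ u ∈ Set.Icc (0:ℝ) 1, ∀ v ∈ Set.Icc (0:ℝ) 1, u ≤ v → |u - v| < δ →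
      |runMax x u - runMax x v| ≤ ε := by
    intro u hu v hv huv hd
    have hmono : runMax x u ≤ runMax x v :=
      csSup_le_csSup (bddAbove_image_of_bound hMx' hv)
        ((Set.nonempty_Icc.2 hu.1).image _)
        (Set.image_mono (Set.Icc_subset_Icc_right huv))
    have hup : runMax x v ≤ runMax x u + ε := by
      refine csSup_le ((Set.nonempty_Icc.2 hv.1).image _) ?_
      rintro y ⟨s, hs, rfl⟩
      have hs1 : s ∈ Set.Icc (0:ℝ) 1 := ⟨hs.1, hs.2.trans hv.2⟩
      rcases le_or_gt s u with h1 | h1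
      · have : x s ≤ runMax x u :=
          le_csSup (bddAbove_image_of_bound hMx' hu) (Set.mem_image_of_mem _ ⟨hs.1, h1⟩)
        linarith
      · have hds : dist s u < δ := by
          rw [Real.dist_eq, abs_of_nonneg (by linarith)]
          rw [abs_of_nonpos (by linarith)] at hd
          linarith [hs.2]
        have h2 := hδ' s hs1 u hu hds
        rw [Real.dist_eq] at h2
        have h3 : x u ≤ runMax x u :=
          le_csSup (bddAbove_image_of_bound hMx' hu)
            (Set.mem_image_of_mem _ ⟨hu.1, le_refl _⟩)
        have h4 := (abs_le.1 h2.le).2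
        linarith
    rw [abs_sub_le_iff]
    constructor <;> linarith
  intro u hu v hv hd
  rcases le_or_gt u v with h | h
  · exact key u hu v hv h hd
  · rw [abs_sub_comm]
    rw [abs_sub_comm] at hd
    exact key v hv u hu h.le hd

lemma runMax_eval_tendsto {x : ℝ → ℝ} (hxc : ContinuousOn x (Set.Icc 0 1))
    {xn : ℕ → ℝ → ℝ}
    (hU : ∀ ε > 0, ∀ᶠ n in Filter.atTop, ∀ t ∈ Set.Icc (0:ℝ) 1, |xn n t - x t| ≤ ε)
    {t : ℕ → ℝ} {t0 : ℝ} (htn : ∀ n, t n ∈ Set.Icc (0:ℝ) 1) (ht0 : t0 ∈ Set.Icc (0:ℝ) 1)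
    (ht : Filter.Tendsto t Filter.atTop (nhds t0)) :
    Filter.Tendsto (fun n => runMax (xn n) (t n)) Filter.atTop (nhds (runMax x t0)) := by
  rw [Metric.tendsto_nhds]
  intro ε hε
  obtain ⟨Mx, hMx⟩ := isCompact_Icc.exists_bound_of_continuousOn hxc
  have hMx' : ∀ s ∈ Set.Icc (0:ℝ) 1, |x s| ≤ Mx := by
    intro s hs; have := hMx s hs; rwa [Real.norm_eq_abs] at this
  obtain ⟨δ, hδ, hδ'⟩ := runMax_uc hxc (ε/4) (by positivity)
  filter_upwards [hU (ε/4) (by positivity), Metric.tendsto_nhds.1 ht δ hδ] with n hn hn2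
  rw [Real.dist_eq] at hn2 ⊢
  have h1 : |runMax (xn n) (t n) - runMax x (t n)| ≤ ε/4 := runMax_diff hMx' hn (htn n)
  have h2 : |runMax x (t n) - runMax x t0| ≤ ε/4 := hδ' (t n) (htn n) t0 ht0 hn2
  calc |runMax (xn n) (t n) - runMax x t0|
      ≤ |runMax (xn n) (t n) - runMax x (t n)| + |runMax x (t n) - runMax x t0| :=
        abs_sub_le _ _ _
    _ ≤ ε/4 + ε/4 := add_le_add h1 h2
    _ < ε := by linarith
lemma exit_lower {a b x : ℝ → ℝ}
    (ha : ContinuousOn a (Set.Icc 0 1)) (hb : ContinuousOn b (Set.Icc 0 1))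
    (hxc : ContinuousOn x (Set.Icc 0 1))
    {xn : ℕ → ℝ → ℝ}
    (hU : ∀ ε > 0, ∀ᶠ n in Filter.atTop, ∀ t ∈ Set.Icc (0:ℝ) 1, |xn n t - x t| ≤ ε) :
    ∀ ε > 0, ∀ᶠ n in Filter.atTop,
      exitTime a b x - ε ≤ exitTime a b (xn n) := by
  intro ε hε
  set τ := exitTime a b x with hτ
  have hτm := exitTime_mem a b x
  rcases le_or_gt τ ε with hcase | hcase
  · filter_upwards with n
    have := (exitTime_mem a b (xn n)).1
    linarith
  · have hK : Set.Icc (0:ℝ) (τ - ε) ⊆ Set.Icc (0:ℝ) 1 :=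
      Set.Icc_subset_Icc_right (by linarith [hτm.2])
    set φ : ℝ → ℝ := fun t => min (x t - a t) (b t - x t) with hφ
    have hφc : ContinuousOn φ (Set.Icc 0 (τ - ε)) :=
      (((hxc.mono hK).sub (ha.mono hK)).inf ((hb.mono hK).sub (hxc.mono hK)))
    obtain ⟨t0, ht0, hmin⟩ := isCompact_Icc.exists_isMinOn
      (Set.nonempty_Icc.2 (by linarith)) hφc
    have ht0' : t0 ∈ Set.Icc (0:ℝ) 1 := hK ht0
    have ht0τ : t0 < τ := lt_of_le_of_lt ht0.2 (by linarith)
    obtain ⟨hint1, hint2⟩ := exit_interior ht0' ht0τ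
    set η := φ t0 with hη
    have hηpos : 0 < η := lt_min (by linarith) (by linarith)
    filter_upwards [hU (η/2) (by positivity)] with n hn
    refine le_csInf (exitSet_nonempty a b (xn n)) ?_
    intro y hy
    rcases hy with hy | hy
    · by_contra hcon
      push_neg at hcon
      have hyK : y ∈ Set.Icc (0:ℝ) (τ - ε) := ⟨hy.1.1, hcon.le⟩
      have hφy : η ≤ φ y := hmin hyK
      have h1 : η ≤ x y - a y := le_trans hφy (min_le_left _ _)
      have h2 : η ≤ b y - x y := le_trans hφy (min_le_right _ _)
      have h3 := abs_le.1 (hn y (hK hyK))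
      rcases hy.2 with h4 | h4 <;> linarith [h3.1, h3.2]
    · rw [Set.mem_singleton_iff] at hy
      rw [hy]
      linarith [hτm.2]

lemma exit_upper {a b x : ℝ → ℝ}
    (hx : MemC1 a b x ∨ MemC2 a b x) (hτ1 : exitTime a b x < 1)
    {xn : ℕ → ℝ → ℝ}
    (hU : ∀ ε > 0, ∀ᶠ n in Filter.atTop, ∀ t ∈ Set.Icc (0:ℝ) 1, |xn n t - x t| ≤ ε) :
    ∀ ε > 0, ∀ᶠ n in Filter.atTop,
      exitTime a b (xn n) < exitTime a b x + ε := by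
  intro ε hε
  set τ := exitTime a b x with hτ
  have hτm := exitTime_mem a b x
  set ε' := min (ε/2) ((1-τ)/2) with hε'
  have hε'pos : 0 < ε' := lt_min (by linarith) (by linarith)
  have hε'a : ε' ≤ ε/2 := min_le_left _ _
  have hε'b : ε' ≤ (1-τ)/2 := min_le_right _ _
  -- find t* in (τ, τ + ε'] where x strictly violates a barrier
  have hstar : ∃ t', τ < t' ∧ t' ≤ τ + ε' ∧ t' ≤ 1 ∧
      ((b t' < x t') ∨ (x t' < a t')) := by
    rcases hx with hx | hx
    · by_contra hcon
      push_neg at hcon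
      have hgoal : τ + ε' ≤ sInf ({t | τ < t ∧ t ≤ 1 ∧ b t < x t} ∪ {1}) := by
        refine le_csInf ⟨1, Set.mem_union_right _ rfl⟩ ?_
        intro y hy
        rcases hy with hy | hy
        · by_contra hc2
          push_neg at hc2
          have := (hcon y hy.1 hc2.le hy.2.1).1
          linarith [hy.2.2]
        · rw [Set.mem_singleton_iff] at hy
          rw [hy]; linarith
      rw [hx.2.2.2] at hgoal
      linarith
    · by_contra hcon
      push_neg at hcon
      have hgoal : τ + ε' ≤ sInf ({t | τ < t ∧ t ≤ 1 ∧ x t < a t} ∪ {1}) := by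
        refine le_csInf ⟨1, Set.mem_union_right _ rfl⟩ ?_
        intro y hy
        rcases hy with hy | hy
        · by_contra hc2
          push_neg at hc2
          have := (hcon y hy.1 hc2.le hy.2.1).2
          linarith [hy.2.2]
        · rw [Set.mem_singleton_iff] at hy
          rw [hy]; linarith
      rw [hx.2.2.2] at hgoal
      linarith
  obtain ⟨t', ht1, ht2, ht3, ht4⟩ := hstar
  have ht'I : t' ∈ Set.Icc (0:ℝ) 1 := ⟨le_trans hτm.1 ht1.le, ht3⟩
  have key : ∀ᶠ n in Filter.atTop, xn n t' ≤ a t' ∨ b t' ≤ xn n t' := by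
    rcases ht4 with h | h
    · have hηpos : 0 < x t' - b t' := by linarith
      filter_upwards [hU ((x t' - b t')/2) (by positivity)] with n hn
      have h3 := abs_le.1 (hn t' ht'I)
      right; linarith [h3.1]
    · have hηpos : 0 < a t' - x t' := by linarith
      filter_upwards [hU ((a t' - x t')/2) (by positivity)] with n hn
      have h3 := abs_le.1 (hn t' ht'I)
      left; linarith [h3.2]
  filter_upwards [key] with n hn
  have hmem : t' ∈ ({t ∈ Set.Icc (0:ℝ) 1 | xn n t ≤ a t ∨ b t ≤ xn n t} ∪ {1}) :=
    Or.inl ⟨ht'I, hn⟩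
  have := csInf_le (exitSet_bddBelow a b (xn n)) hmem
  calc exitTime a b (xn n) ≤ t' := this
    _ ≤ τ + ε' := ht2
    _ < τ + ε := by linarith

lemma exit_tendsto {a b x : ℝ → ℝ}
    (ha : ContinuousOn a (Set.Icc 0 1)) (hb : ContinuousOn b (Set.Icc 0 1))
    (hxc : ContinuousOn x (Set.Icc 0 1))
    (hx : MemC1 a b x ∨ MemC2 a b x ∨ MemC3 a b x)
    {xn : ℕ → ℝ → ℝ}
    (hU : ∀ ε > 0, ∀ᶠ n in Filter.atTop, ∀ t ∈ Set.Icc (0:ℝ) 1, |xn n t - x t| ≤ ε) :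
    Filter.Tendsto (fun n => exitTime a b (xn n)) Filter.atTop (nhds (exitTime a b x)) := by
  rw [Metric.tendsto_nhds]
  intro ε hε
  have hlow := exit_lower ha hb hxc hU (ε/2) (by positivity)
  have hup : ∀ᶠ n in Filter.atTop, exitTime a b (xn n) < exitTime a b x + ε := by
    rcases hx with hx' | hx' | hx'
    · exact exit_upper (Or.inl hx') hx'.2.1 hU ε hε
    · exact exit_upper (Or.inr hx') hx'.2.1 hU ε hε
    · filter_upwards with n
      have h1 := (exitTime_mem a b (xn n)).2
      rw [hx'.2]
      linarith
  filter_upwards [hlow, hup] with n h1 h2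
  rw [Real.dist_eq, abs_sub_lt_iff]
  constructor <;> linarith
/-- Continuity of
`G(x) = g( Π(x, π(x)ν¹), Π(x, ν²), Π(x*, π(x)ν³), Π(x*, ν⁴), π(x) )`
at every `x ∈ C_1 ∪ C_2 ∪ C_3` at which `g` is continuous at the point
`Z(x)`: if `x_n → x` in the Skorohod topology, then `G(x_n) → G(x)`. -/
theorem G_tendsto (m : ℕ) (ν1 ν2 ν3 ν4 : Fin m → ℝ)
    (hν : ∀ i, ν1 i ∈ Set.Icc (0:ℝ) 1 ∧ ν2 i ∈ Set.Icc (0:ℝ) 1 ∧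
      ν3 i ∈ Set.Icc (0:ℝ) 1 ∧ ν4 i ∈ Set.Icc (0:ℝ) 1)
    (a b : ℝ → ℝ)
    (ha : ContinuousOn a (Set.Icc 0 1)) (hb : ContinuousOn b (Set.Icc 0 1))
    (hab : ∀ t ∈ Set.Icc (0:ℝ) 1, a t < b t)
    (g : (Fin m → ℝ) × (Fin m → ℝ) × (Fin m → ℝ) × (Fin m → ℝ) × ℝ → ℝ)
    (x : ℝ → ℝ) (hx : MemC1 a b x ∨ MemC2 a b x ∨ MemC3 a b x)
    (hg : ContinuousAt g (argZ m a b ν1 ν2 ν3 ν4 x))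
    (xn : ℕ → ℝ → ℝ) (hxn : ∀ n, RCLL (xn n))
    (hconv : SkorohodTendsto xn x) :
    Filter.Tendsto (fun n => g (argZ m a b ν1 ν2 ν3 ν4 (xn n))) Filter.atTop
      (nhds (g (argZ m a b ν1 ν2 ν3 ν4 x))) := by
  have hxc : ContinuousOn x (Set.Icc 0 1) := by
    rcases hx with h | h | h <;> exact h.1
  have hU := unif_conv hxc hxn hconv
  have hτ : Filter.Tendsto (fun n => exitTime a b (xn n)) Filter.atTop
      (nhds (exitTime a b x)) := exit_tendsto ha hb hxc hx hU
  have hτm := exitTime_mem a b x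
  have hτnm : ∀ n, exitTime a b (xn n) ∈ Set.Icc (0:ℝ) 1 := fun n => exitTime_mem a b (xn n)
  have hmul : ∀ s ∈ Set.Icc (0:ℝ) 1, ∀ v ∈ Set.Icc (0:ℝ) 1, s * v ∈ Set.Icc (0:ℝ) 1 := by
    intro s hs v hv
    exact ⟨mul_nonneg hs.1 hv.1, by nlinarith [hs.2, hv.2, hs.1, hv.1]⟩
  have c1 : Filter.Tendsto (fun n => proj m (xn n) (fun i => exitTime a b (xn n) * ν1 i))
      Filter.atTop (nhds (proj m x (fun i => exitTime a b x * ν1 i))) := by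
    rw [tendsto_pi_nhds]
    intro i
    exact eval_tendsto hxc hU (fun n => hmul _ (hτnm n) _ (hν i).1)
      (hmul _ hτm _ (hν i).1) (hτ.mul_const _)
  have c2 : Filter.Tendsto (fun n => proj m (xn n) ν2) Filter.atTop
      (nhds (proj m x ν2)) := by
    rw [tendsto_pi_nhds]
    intro i
    exact eval_tendsto hxc hU (fun n => (hν i).2.1) (hν i).2.1 tendsto_const_nhds
  have c3 : Filter.Tendsto (fun n => proj m (runMax (xn n)) (fun i => exitTime a b (xn n) * ν3 i))
      Filter.atTop (nhds (proj m (runMax x) (fun i => exitTime a b x * ν3 i))) := by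
    rw [tendsto_pi_nhds]
    intro i
    exact runMax_eval_tendsto hxc hU (fun n => hmul _ (hτnm n) _ (hν i).2.2.1)
      (hmul _ hτm _ (hν i).2.2.1) (hτ.mul_const _)
  have c4 : Filter.Tendsto (fun n => proj m (runMax (xn n)) ν4) Filter.atTop
      (nhds (proj m (runMax x) ν4)) := by
    rw [tendsto_pi_nhds]
    intro i
    exact runMax_eval_tendsto hxc hU (fun n => (hν i).2.2.2) (hν i).2.2.2 tendsto_const_nhds
  have H : Filter.Tendsto (fun n => argZ m a b ν1 ν2 ν3 ν4 (xn n)) Filter.atTop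
      (nhds (argZ m a b ν1 ν2 ν3 ν4 x)) :=
    c1.prodMk_nhds (c2.prodMk_nhds (c3.prodMk_nhds (c4.prodMk_nhds hτ)))
  exact hg.tendsto.comp H
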